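/- For all words u, v over Y₀, the asymptotic leading coefficients satisfy C^−_u · C^−_v = C^−_{u⧢v} = C^−_{u⊎v}, where C^− is extended linearly to polynomials and C^−_{u⧢v} (resp. C^−_{u⊎v}) is the linear extension applied to the shuffle (resp. quasi-shuffle) product; here only the words of maximal total degree (weight plus length) in u⊎v contribute, since C^−_P for a homogeneous-by-degree decomposition picks the top degree component. -/

import Mathlib

/-- Shuffle product of two words over `Y₀` (lists of indices), as a multiset of words. -/
def shuffles : List ℕ → List ℕ → Multiset (List ℕ)
  | [], v => {v}
  | i :: u, [] => {i :: u}
  | i :: u, j :: v =>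
      ((shuffles u (j :: v)).map (i :: ·)) + ((shuffles (i :: u) v).map (j :: ·))
  termination_by u v => u.length + v.length

/-- Quasi-shuffle (stuffle) product of two words over `Y₀`, as a multiset of words:
`y_i u ⊎ y_j v = y_i(u ⊎ y_j v) + y_j(y_i u ⊎ v) + y_{i+j}(u ⊎ v)`. -/
def stuffle : List ℕ → List ℕ → Multiset (List ℕ)
  | [], v => {v}
  | i :: u, [] => {i :: u}
  | i :: u, j :: v =>
      ((stuffle u (j :: v)).map (i :: ·)) + ((stuffle (i :: u) v).map (j :: ·))
        + ((stuffle u v).map ((i + j) :: ·))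
  termination_by u v => u.length + v.length

/-- The total degree `(w) + |w|` (weight plus length) of a word. -/
def deg (w : List ℕ) : ℕ := w.sum + w.length

/-- `C^−_w = Π over nonempty suffixes v of w of 1/((v)+|v|)`. -/
noncomputable def Cneg (w : List ℕ) : ℝ :=
  ∏ i ∈ Finset.range w.length, ((deg (w.drop i) : ℕ) : ℝ)⁻¹

/-- The linear extension of `C^−` to a (multiset encoding of a) polynomial: only the words
of maximal total degree `(w)+|w|` contribute. -/
noncomputable def CnegM (ms : Multiset (List ℕ)) : ℝ :=
  ((ms.filter (fun w => deg w = (ms.map deg).sup)).map Cneg).sum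

lemma deg_cons (i : ℕ) (w : List ℕ) : deg (i :: w) = deg w + (i + 1) := by
  simp [deg]; omega

lemma deg_nil : deg [] = 0 := rfl

lemma Cneg_nil : Cneg [] = 1 := by simp [Cneg]

lemma Cneg_cons (i : ℕ) (w : List ℕ) :
    Cneg (i :: w) = ((deg (i :: w) : ℕ) : ℝ)⁻¹ * Cneg w := by
  unfold Cneg
  rw [List.length_cons, Finset.prod_range_succ']
  simp [mul_comm]

lemma shuffles_deg : ∀ u v w, w ∈ shuffles u v → deg w = deg u + deg v := by
  intro u
  induction u with
  | nil => intro v w hw; simp [shuffles] at hw; simp [hw, deg_nil]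
  | cons i u ih =>
    intro v
    induction v with
    | nil => intro w hw; simp [shuffles] at hw; simp [hw, deg_nil]
    | cons j v ihv =>
      intro w hw
      simp only [shuffles, Multiset.mem_add, Multiset.mem_map] at hw
      rcases hw with ⟨w', hw', rfl⟩ | ⟨w', hw', rfl⟩
      · rw [deg_cons, ih _ _ hw', deg_cons, deg_cons]; ring
      · rw [deg_cons, ihv _ hw', deg_cons, deg_cons]; ring

lemma shuffles_exists : ∀ u v, ∃ w, w ∈ shuffles u v := by
  intro u
  induction u with
  | nil => intro v; exact ⟨v, by simp [shuffles]⟩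
  | cons i u ih =>
    intro v
    induction v with
    | nil => exact ⟨i :: u, by simp [shuffles]⟩
    | cons j v ihv =>
      obtain ⟨w, hw⟩ := ih (j :: v)
      exact ⟨i :: w, by simp only [shuffles, Multiset.mem_add, Multiset.mem_map]
                        exact Or.inl ⟨w, hw, rfl⟩⟩

lemma sum_map_cons (i D : ℕ) (s : Multiset (List ℕ))
    (h : ∀ w ∈ s, deg (i :: w) = D) :
    ((s.map (i :: ·)).map Cneg).sum = ((D : ℕ) : ℝ)⁻¹ * (s.map Cneg).sum := by
  rw [Multiset.map_map]
  have : s.map (Cneg ∘ (i :: ·)) = s.map (fun w => ((D : ℕ) : ℝ)⁻¹ * Cneg w) :=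
    Multiset.map_congr rfl (fun w hw => by
      simp only [Function.comp_apply, Cneg_cons, h w hw])
  rw [this, Multiset.sum_map_mul_left]

lemma sum_shuffles : ∀ u v, ((shuffles u v).map Cneg).sum = Cneg u * Cneg v := by
  intro u
  induction u with
  | nil => intro v; simp [shuffles, Cneg_nil]
  | cons i u ih =>
    intro v
    induction v with
    | nil => simp [shuffles, Cneg_nil]
    | cons j v ihv =>
      have hD1 : ∀ w ∈ shuffles u (j :: v), deg (i :: w) = deg (i :: u) + deg (j :: v) := by
        intro w hw; have := shuffles_deg _ _ _ hw; simp only [deg_cons] at *; omega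
      have hD2 : ∀ w ∈ shuffles (i :: u) v, deg (j :: w) = deg (i :: u) + deg (j :: v) := by
        intro w hw; have := shuffles_deg _ _ _ hw; simp only [deg_cons] at *; omega
      simp only [shuffles, Multiset.map_add, Multiset.sum_add]
      rw [sum_map_cons i _ _ hD1, sum_map_cons j _ _ hD2, ih, ihv]
      rw [Cneg_cons i u, Cneg_cons j v]
      have ha : ((deg (i :: u) : ℕ) : ℝ) ≠ 0 := by
        rw [deg_cons]; push_cast; positivity
      have hb : ((deg (j :: v) : ℕ) : ℝ) ≠ 0 := by
        rw [deg_cons]; push_cast; positivity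
      have hab : ((deg (i :: u) + deg (j :: v) : ℕ) : ℝ) ≠ 0 := by
        push_cast; intro h
        exact ha (by linarith [Nat.cast_nonneg (α := ℝ) (deg (i :: u)),
          Nat.cast_nonneg (α := ℝ) (deg (j :: v))])
      field_simp
      push_cast; ring

lemma stuffle_deg_le : ∀ u v w, w ∈ stuffle u v → deg w ≤ deg u + deg v := by
  intro u
  induction u with
  | nil => intro v w hw; simp [stuffle] at hw; simp [hw, deg_nil]
  | cons i u ih =>
    intro v
    induction v with
    | nil => intro w hw; simp [stuffle] at hw; simp [hw, deg_nil]
    | cons j v ihv =>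
      intro w hw
      simp only [stuffle, Multiset.mem_add, Multiset.mem_map] at hw
      rcases hw with (⟨w', hw', rfl⟩ | ⟨w', hw', rfl⟩) | ⟨w', hw', rfl⟩
      · have := ih _ _ hw'; rw [deg_cons] at *; simp [deg_cons] at *; omega
      · have := ihv _ hw'; rw [deg_cons] at *; simp [deg_cons] at *; omega
      · have := ih _ _ hw'; simp [deg_cons] at *; omega

lemma stuffle_filter : ∀ u v,
    (stuffle u v).filter (fun w => deg w = deg u + deg v) = shuffles u v := by
  intro u
  induction u with
  | nil =>
    intro v
    simp only [stuffle, shuffles, deg_nil, zero_add]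
    rw [Multiset.filter_singleton]
    simp
  | cons i u ih =>
    intro v
    induction v with
    | nil =>
      simp only [stuffle, shuffles, deg_nil, add_zero]
      rw [Multiset.filter_singleton]
      simp
    | cons j v ihv =>
      simp only [stuffle, shuffles, Multiset.filter_add, Multiset.filter_map]
      have e1 : Multiset.filter ((fun w => deg w = deg (i :: u) + deg (j :: v)) ∘ (i :: ·))
          (stuffle u (j :: v))
          = Multiset.filter (fun w => deg w = deg u + deg (j :: v)) (stuffle u (j :: v)) :=
        Multiset.filter_congr (fun w _ => by
          simp only [Function.comp_apply, deg_cons]; omega)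
      have e2 : Multiset.filter ((fun w => deg w = deg (i :: u) + deg (j :: v)) ∘ (j :: ·))
          (stuffle (i :: u) v)
          = Multiset.filter (fun w => deg w = deg (i :: u) + deg v) (stuffle (i :: u) v) :=
        Multiset.filter_congr (fun w _ => by
          simp only [Function.comp_apply, deg_cons]; omega)
      have e3 : Multiset.filter ((fun w => deg w = deg (i :: u) + deg (j :: v)) ∘ ((i + j) :: ·))
          (stuffle u v) = 0 :=
        Multiset.filter_eq_nil.2 (fun w hw => by
          have := stuffle_deg_le _ _ _ hw
          simp only [Function.comp_apply, deg_cons]; omega)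
      rw [e1, e2, e3, ih, ihv, Multiset.map_zero, add_zero]

/-- For all words `u, v` over `Y₀`: `C^−_u · C^−_v = C^−_{u⧢v} = C^−_{u⊎v}`, where `C^−` is
extended linearly (picking the top total-degree component) to the shuffle and quasi-shuffle
products. -/
theorem stmt13 (u v : List ℕ) :
    Cneg u * Cneg v = CnegM (shuffles u v) ∧
    Cneg u * Cneg v = CnegM (stuffle u v) := by
  obtain ⟨w₀, hw₀⟩ := shuffles_exists u v
  have hsup : ((shuffles u v).map deg).sup = deg u + deg v := by
    apply le_antisymm
    · refine Multiset.sup_le.2 ?_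
      intro d hd
      obtain ⟨w, hw, rfl⟩ := Multiset.mem_map.1 hd
      exact (shuffles_deg _ _ _ hw).le
    · rw [← shuffles_deg u v w₀ hw₀]
      exact Multiset.le_sup (Multiset.mem_map_of_mem _ hw₀)
  have hw₀' : w₀ ∈ stuffle u v ∧ deg w₀ = deg u + deg v := by
    have : w₀ ∈ (stuffle u v).filter (fun w => deg w = deg u + deg v) := by
      rw [stuffle_filter]; exact hw₀
    simpa using Multiset.mem_filter.1 this
  have hsup' : ((stuffle u v).map deg).sup = deg u + deg v := by
    apply le_antisymm
    · refine Multiset.sup_le.2 ?_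
      intro d hd
      obtain ⟨w, hw, rfl⟩ := Multiset.mem_map.1 hd
      exact stuffle_deg_le _ _ _ hw
    · rw [← hw₀'.2]
      exact Multiset.le_sup (Multiset.mem_map_of_mem _ hw₀'.1)
  constructor
  · rw [CnegM, hsup, Multiset.filter_eq_self.2 (fun w hw => shuffles_deg _ _ _ hw),
      sum_shuffles]
  · rw [CnegM, hsup', stuffle_filter, sum_shuffles]
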